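/- Let K₁ and K₂ be isotropic subspaces of (E, B), with quotient maps q₁ : K₁^⊥ → K₁^⊥/K₁ and q₂ : K₂^⊥ → K₂^⊥/K₂, and let L : K₁^⊥ ∩ K₂^⊥ → (K₁^⊥/K₁) × (K₂^⊥/K₂) be the linear map e ↦ (q₁(e), q₂(e)). Then the kernel of L equals K₁ ∩ K₂, and the image of L has dimension dim E − dim K₁ − dim K₂. -/

import Mathlib

/-- The orthogonal complement `K^⊥` of a subspace `K` with respect to `B`. -/
noncomputable def orthB {E : Type*} [AddCommGroup E] [Module ℝ E]
    (B : LinearMap.BilinForm ℝ E) (K : Submodule ℝ E) : Submodule ℝ E :=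
  LinearMap.BilinForm.orthogonal B K
/-- An isotropic `K`, regarded as a submodule of `K^⊥`. -/
noncomputable def Ksub {E : Type*} [AddCommGroup E] [Module ℝ E]
    (B : LinearMap.BilinForm ℝ E) (K : Submodule ℝ E) : Submodule ℝ ↥(orthB B K) :=
  Submodule.comap (orthB B K).subtype K

/-- The reduced space `K^⊥/K`. -/
abbrev Red {E : Type*} [AddCommGroup E] [Module ℝ E]
    (B : LinearMap.BilinForm ℝ E) (K : Submodule ℝ E) :=
  ↥(orthB B K) ⧸ Ksub B K

/-- The quotient map `q : K^⊥ → K^⊥/K`. -/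
noncomputable def qmap {E : Type*} [AddCommGroup E] [Module ℝ E]
    (B : LinearMap.BilinForm ℝ E) (K : Submodule ℝ E) :
    ↥(orthB B K) →ₗ[ℝ] Red B K :=
  (Ksub B K).mkQ
/-- The map `L : K₁^⊥ ∩ K₂^⊥ → (K₁^⊥/K₁) × (K₂^⊥/K₂)`, `e ↦ (q₁(e), q₂(e))`. -/
noncomputable def Lmap {E : Type*} [AddCommGroup E] [Module ℝ E]
    (B : LinearMap.BilinForm ℝ E) (K₁ K₂ : Submodule ℝ E) :
    ↥(orthB B K₁ ⊓ orthB B K₂) →ₗ[ℝ] Red B K₁ × Red B K₂ :=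
  LinearMap.prod
    (qmap B K₁ ∘ₗ Submodule.inclusion inf_le_left)
    (qmap B K₂ ∘ₗ Submodule.inclusion inf_le_right)

/-- For isotropic `K₁, K₂`, the map `L : K₁^⊥ ∩ K₂^⊥ → (K₁^⊥/K₁) × (K₂^⊥/K₂)`,
`e ↦ (q₁(e), q₂(e))` has kernel `K₁ ∩ K₂` and image of dimension
`dim E − dim K₁ − dim K₂`. -/
theorem stmt9 (E : Type*) [AddCommGroup E] [Module ℝ E] [FiniteDimensional ℝ E]
    (B : LinearMap.BilinForm ℝ E)
    (hBsymm : ∀ e e', B e e' = B e' e)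
    (hBnd : LinearMap.BilinForm.Nondegenerate B)
    (K₁ K₂ : Submodule ℝ E)
    (hK₁ : K₁ ≤ orthB B K₁) (hK₂ : K₂ ≤ orthB B K₂) :
    LinearMap.ker (Lmap B K₁ K₂)
        = Submodule.comap (orthB B K₁ ⊓ orthB B K₂).subtype (K₁ ⊓ K₂) ∧
    (Module.finrank ℝ ↥(LinearMap.range (Lmap B K₁ K₂)) : ℤ)
        = (Module.finrank ℝ E : ℤ) - (Module.finrank ℝ ↥K₁ : ℤ)
          - (Module.finrank ℝ ↥K₂ : ℤ) := by
  have hrefl : B.IsRefl := fun x y h => by rw [hBsymm]; exact h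
  have hker : LinearMap.ker (Lmap B K₁ K₂)
      = Submodule.comap (orthB B K₁ ⊓ orthB B K₂).subtype (K₁ ⊓ K₂) := by
    ext e
    simp only [LinearMap.mem_ker, Submodule.mem_comap, Submodule.mem_inf]
    show ((Ksub B K₁).mkQ ⟨e.1, (Submodule.mem_inf.1 e.2).1⟩,
          (Ksub B K₂).mkQ ⟨e.1, (Submodule.mem_inf.1 e.2).2⟩) = 0 ↔ _
    rw [Prod.mk_eq_zero, Submodule.mkQ_apply, Submodule.mkQ_apply,
        Submodule.Quotient.mk_eq_zero, Submodule.Quotient.mk_eq_zero]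
    rfl
  refine ⟨hker, ?_⟩
  have horth : orthB B K₁ ⊓ orthB B K₂ = LinearMap.BilinForm.orthogonal B (K₁ ⊔ K₂) := by
    ext e
    simp only [Submodule.mem_inf, orthB, LinearMap.BilinForm.mem_orthogonal_iff]
    constructor
    · rintro ⟨h1, h2⟩ n hn
      rcases Submodule.mem_sup.1 hn with ⟨x, hx, y, hy, rfl⟩
      have := h1 x hx
      have := h2 y hy
      rw [map_add, LinearMap.add_apply, this]
      simpa using ‹B x e = 0›
    · intro h
      exact ⟨fun n hn => h n (Submodule.mem_sup_left hn),
             fun n hn => h n (Submodule.mem_sup_right hn)⟩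
  have hdim_dom : Module.finrank ℝ ↥(orthB B K₁ ⊓ orthB B K₂)
      = Module.finrank ℝ E - Module.finrank ℝ ↥(K₁ ⊔ K₂) := by
    rw [horth]
    exact LinearMap.BilinForm.finrank_orthogonal hBnd _
  have hker_le : K₁ ⊓ K₂ ≤ orthB B K₁ ⊓ orthB B K₂ :=
    inf_le_inf hK₁ hK₂
  have hdim_ker : Module.finrank ℝ ↥(LinearMap.ker (Lmap B K₁ K₂))
      = Module.finrank ℝ ↥(K₁ ⊓ K₂) := by
    rw [hker]
    exact (Submodule.comapSubtypeEquivOfLe hker_le).finrank_eq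
  have hrn := LinearMap.finrank_range_add_finrank_ker (Lmap B K₁ K₂)
  have hsupinf := Submodule.finrank_sup_add_finrank_inf_eq K₁ K₂
  have hsup_le : Module.finrank ℝ ↥(K₁ ⊔ K₂) ≤ Module.finrank ℝ E :=
    Submodule.finrank_le _
  have h1 : Module.finrank ℝ ↥K₁ ≤ Module.finrank ℝ E :=
    Submodule.finrank_le _
  omega
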